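/- Let a ≥ 2. There exists a constant C depending only on a such that for every v ∈ C^1([0,1]), ∫_0^1 z^a |v(z)|² dz ≤ C·(∫_0^1 z^a |v'(z)|² dz + |v(1)|²). -/

import Mathlib

open Real Set intervalIntegral

theorem weighted_poincare_hardy_unit
    (a : ℝ) (ha : 2 ≤ a) :
    ∃ C : ℝ,
      ∀ (v v' : ℝ → ℝ),
        (∀ z ∈ Icc (0:ℝ) 1, HasDerivWithinAt v (v' z) (Icc (0:ℝ) 1) z) →
        ContinuousOn v' (Icc (0:ℝ) 1) →
        ∫ z in (0:ℝ)..1, z ^ a * |v z| ^ 2 ≤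
          C * ((∫ z in (0:ℝ)..1, z ^ a * |v' z| ^ 2) + |v 1| ^ 2) := by
  refine ⟨2, fun v v' hv hv' => ?_⟩
  have ha0 : (0:ℝ) < a := by linarith
  have ha1 : (0:ℝ) < a + 1 := by linarith
  have hne : a + 1 ≠ 0 := ne_of_gt ha1
  have hvc : ContinuousOn v (Icc 0 1) := fun z hz => (hv z hz).continuousWithinAt
  have hrp : ∀ p : ℝ, 0 < p → Continuous (fun z : ℝ => z ^ p) := by
    intro p hp
    rw [continuous_iff_continuousAt]
    intro x
    exact Real.continuousAt_rpow_const x p (Or.inr hp.le)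
  -- the functions
  set g : ℝ → ℝ := fun z => z ^ (a+1) * (2 * v z * v' z) / (a+1) with hg_def
  set bnd : ℝ → ℝ := fun z => 1/6 * (z ^ a * v z ^ 2) + 2/3 * (z ^ a * v' z ^ 2) with hbnd_def
  -- continuity
  have hcI : ContinuousOn (fun z : ℝ => z ^ a * v z ^ 2) (Icc 0 1) :=
    ((hrp a ha0).continuousOn).mul (hvc.pow 2)
  have hcJ : ContinuousOn (fun z : ℝ => z ^ a * v' z ^ 2) (Icc 0 1) :=
    ((hrp a ha0).continuousOn).mul (hv'.pow 2)
  have hcg : ContinuousOn g (Icc 0 1) := by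
    apply ContinuousOn.div_const
    exact ((hrp (a+1) ha1).continuousOn).mul
      ((continuousOn_const.mul hvc).mul hv')
  have hcbnd : ContinuousOn bnd (Icc 0 1) :=
    (continuousOn_const.mul hcI).add (continuousOn_const.mul hcJ)
  have huIcc : uIcc (0:ℝ) 1 = Icc 0 1 := uIcc_of_le zero_le_one
  have hintI : IntervalIntegrable (fun z : ℝ => z ^ a * v z ^ 2) MeasureTheory.volume 0 1 :=
    (huIcc ▸ hcI).intervalIntegrable
  have hintJ : IntervalIntegrable (fun z : ℝ => z ^ a * v' z ^ 2) MeasureTheory.volume 0 1 :=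
    (huIcc ▸ hcJ).intervalIntegrable
  have hintg : IntervalIntegrable g MeasureTheory.volume 0 1 :=
    (huIcc ▸ hcg).intervalIntegrable
  have hintbnd : IntervalIntegrable bnd MeasureTheory.volume 0 1 :=
    (huIcc ▸ hcbnd).intervalIntegrable
  -- integration by parts identity
  have key : (∫ z in (0:ℝ)..1, (z ^ a * v z ^ 2 + g z))
      = v 1 ^ 2 / (a+1) := by
    have hFc : ContinuousOn (fun z : ℝ => z ^ (a+1) * v z ^ 2 / (a+1)) (Icc 0 1) :=
      (((hrp (a+1) ha1).continuousOn).mul (hvc.pow 2)).div_const _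
    have hderiv : ∀ z ∈ Ioo (0:ℝ) 1,
        HasDerivWithinAt (fun z : ℝ => z ^ (a+1) * v z ^ 2 / (a+1))
          (z ^ a * v z ^ 2 + g z) (Ioi z) z := by
      intro z hz
      obtain ⟨hz0, hz1⟩ := hz
      have h1 : HasDerivAt (fun x : ℝ => x ^ (a+1)) ((a+1) * z ^ a) z := by
        have := Real.hasDerivAt_rpow_const (x := z) (p := a+1) (Or.inl hz0.ne')
        simpa using this
      have h2 : HasDerivAt v (v' z) z :=
        (hv z ⟨hz0.le, hz1.le⟩).hasDerivAt (Icc_mem_nhds hz0 hz1)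
      have h3 : HasDerivAt (fun x => v x ^ 2) (2 * v z * v' z) z := by
        simpa using h2.fun_pow 2
      have h4 := (h1.mul h3).div_const (a+1)
      have heq : ((a+1) * z ^ a * v z ^ 2 + z ^ (a+1) * (2 * v z * v' z)) / (a+1)
          = z ^ a * v z ^ 2 + g z := by
        simp only [hg_def]
        field_simp
      rw [heq] at h4
      exact h4.hasDerivWithinAt
    have hint : IntervalIntegrable (fun z : ℝ => z ^ a * v z ^ 2 + g z)
        MeasureTheory.volume 0 1 := hintI.add hintg
    rw [intervalIntegral.integral_eq_sub_of_hasDeriv_right_of_le zero_le_one hFc hderiv hint]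
    simp [Real.zero_rpow hne, Real.one_rpow]
  rw [intervalIntegral.integral_add hintI hintg] at key
  -- pointwise bound on -g
  have hpt : ∀ z ∈ Icc (0:ℝ) 1, -(g z) ≤ bnd z := by
    intro z hz
    have hA : 0 ≤ z ^ a := Real.rpow_nonneg hz.1 a
    have hpow : z ^ (a+1) = z ^ a * z := by
      rcases eq_or_lt_of_le hz.1 with h | h
      · rw [← h]
        simp [Real.zero_rpow hne, Real.zero_rpow ha0.ne']
      · rw [Real.rpow_add h, Real.rpow_one]
    have hquad : -(2 * (z * (v z * v' z))) ≤ 1/2 * v z ^ 2 + 2 * v' z ^ 2 := by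
      nlinarith [sq_nonneg (v z + 2 * z * v' z),
        mul_nonneg (mul_nonneg (sub_nonneg.2 hz.2) (by linarith [hz.1] : (0:ℝ) ≤ 1 + z))
          (sq_nonneg (v' z))]
    have step1 : -(g z) = z ^ a * (-(2 * (z * (v z * v' z)))) / (a+1) := by
      simp only [hg_def, hpow]
      ring
    have step2 : z ^ a * (-(2 * (z * (v z * v' z)))) / (a+1)
        ≤ z ^ a * (1/2 * v z ^ 2 + 2 * v' z ^ 2) / (a+1) := by
      gcongr
    have step3 : z ^ a * (1/2 * v z ^ 2 + 2 * v' z ^ 2) / (a+1)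
        ≤ z ^ a * (1/2 * v z ^ 2 + 2 * v' z ^ 2) / 3 := by
      apply div_le_div_of_nonneg_left _ (by norm_num) (by linarith)
      positivity
    have step4 : z ^ a * (1/2 * v z ^ 2 + 2 * v' z ^ 2) / 3 = bnd z := by
      simp only [hbnd_def]; ring
    linarith [step1 ▸ le_trans (le_trans step2 step3) step4.le]
  have hmono : (∫ z in (0:ℝ)..1, -(g z)) ≤ ∫ z in (0:ℝ)..1, bnd z :=
    intervalIntegral.integral_mono_on zero_le_one hintg.neg hintbnd hpt
  rw [intervalIntegral.integral_neg] at hmono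
  have hbval : (∫ z in (0:ℝ)..1, bnd z)
      = 1/6 * (∫ z in (0:ℝ)..1, z ^ a * v z ^ 2)
        + 2/3 * (∫ z in (0:ℝ)..1, z ^ a * v' z ^ 2) := by
    simp only [hbnd_def]
    rw [intervalIntegral.integral_add (hintI.const_mul _) (hintJ.const_mul _),
      intervalIntegral.integral_const_mul, intervalIntegral.integral_const_mul]
  have hJ : 0 ≤ ∫ z in (0:ℝ)..1, z ^ a * v' z ^ 2 :=
    intervalIntegral.integral_nonneg zero_le_one
      (fun z hz => mul_nonneg (Real.rpow_nonneg hz.1 a) (sq_nonneg _))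
  have hB : 0 ≤ v 1 ^ 2 := sq_nonneg _
  have hBdiv : v 1 ^ 2 / (a+1) ≤ v 1 ^ 2 / 3 := by
    rcases eq_or_lt_of_le hB with h | h
    · rw [← h]; norm_num
    · exact div_le_div_of_nonneg_left hB (by norm_num) (by linarith)
  simp only [sq_abs]
  set I := ∫ z in (0:ℝ)..1, z ^ a * v z ^ 2
  set J := ∫ z in (0:ℝ)..1, z ^ a * v' z ^ 2
  linarith
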